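/- Let E be a finite-dimensional complex inner product space and let A, B : E →ₗ[ℂ] E be self-adjoint positive-semidefinite operators with ker A = ker B. Let c > 0 be a real number such that A − c • B is positive semidefinite, and let δ ≥ 0 be such that every nonzero eigenvalue of B is at least δ. Then every nonzero eigenvalue of A is at least c·δ. -/

import Mathlib

open scoped InnerProductSpace ComplexOrder

/-- Min-max comparison (Corollary 1): if the self-adjoint positive-semidefinite operators `A`
and `B` have the same kernel, `A - c • B` is positive semidefinite for some `c > 0`, and every
nonzero eigenvalue of `B` is at least `δ ≥ 0`, then every nonzero eigenvalue of `A` is at least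
`c·δ`. -/
theorem gap_comparison
    {E : Type*} [NormedAddCommGroup E] [InnerProductSpace ℂ E] [FiniteDimensional ℂ E]
    (A B : E →ₗ[ℂ] E) (hA_sa : IsSelfAdjoint A) (hB_sa : IsSelfAdjoint B)
    (hA_pos : ∀ x : E, 0 ≤ (⟪x, A x⟫_ℂ).re)
    (hB_pos : ∀ x : E, 0 ≤ (⟪x, B x⟫_ℂ).re)
    (hker : LinearMap.ker A = LinearMap.ker B)
    (c : ℝ) (hc : 0 < c)
    (hdom : ∀ x : E, 0 ≤ (⟪x, (A - (c : ℂ) • B) x⟫_ℂ).re)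
    (δ : ℝ) (hδ : 0 ≤ δ)
    (hBgap : ∀ μ : ℂ, Module.End.HasEigenvalue B μ → μ ≠ 0 → (δ : ℂ) ≤ μ) :
    ∀ μ : ℂ, Module.End.HasEigenvalue A μ → μ ≠ 0 → ((c * δ : ℝ) : ℂ) ≤ μ := by
  intro μ hμ hμ0
  have hAsym : A.IsSymmetric := (LinearMap.isSymmetric_iff_isSelfAdjoint A).mpr hA_sa
  have hBsym : B.IsSymmetric := (LinearMap.isSymmetric_iff_isSelfAdjoint B).mpr hB_sa
  -- μ is real
  have hμre : (starRingEnd ℂ) μ = μ := hAsym.conj_eigenvalue_eq_self hμ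
  have hμim : μ.im = 0 := by
    have := congrArg Complex.im hμre
    simp [Complex.conj_im] at this
    linarith
  -- eigenvector
  obtain ⟨x, hx⟩ := hμ.exists_hasEigenvector
  have hx0 : x ≠ 0 := hx.2
  have hAx : A x = μ • x := hx.apply_eq_smul
  -- spectral basis of B
  set n := Module.finrank ℂ E with hn
  have hnn : Module.finrank ℂ E = n := rfl
  set b := hBsym.eigenvectorBasis hnn with hb
  set lam := hBsym.eigenvalues hnn with hlam
  -- coefficients of x vanish when lam i = 0
  have hcoef : ∀ i : Fin n, lam i = 0 → ⟪b i, x⟫_ℂ = 0 := by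
    intro i hi
    have hBi : B (b i) = 0 := by
      have h : B (b i) = (lam i : ℂ) • b i := hBsym.apply_eigenvectorBasis hnn i
      rw [hi] at h; simpa using h
    have hAi : A (b i) = 0 := by
      have : b i ∈ LinearMap.ker B := by simpa [LinearMap.mem_ker] using hBi
      rw [← hker] at this; simpa [LinearMap.mem_ker] using this
    have h1 : ⟪b i, A x⟫_ℂ = 0 := by
      rw [← hAsym (b i) x, hAi]; simp
    rw [hAx, inner_smul_right] at h1
    exact (mul_eq_zero.mp h1).resolve_left hμ0
  -- each lam i ≥ δ or lam i = 0
  have hlam_ge : ∀ i : Fin n, lam i ≠ 0 → δ ≤ lam i := by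
    intro i hi
    have hev : Module.End.HasEigenvalue B ((lam i : ℂ)) := by
      exact_mod_cast hBsym.hasEigenvalue_eigenvalues hnn i
    have := hBgap (lam i) hev (by exact_mod_cast hi)
    exact_mod_cast this
  -- expand ⟪x, B x⟫ and ⟪x, x⟫ in the basis
  have hsumB : ⟪x, B x⟫_ℂ = ∑ i : Fin n, (lam i : ℂ) * (⟪x, b i⟫_ℂ * ⟪b i, x⟫_ℂ) := by
    rw [← b.sum_inner_mul_inner x (B x)]
    refine Finset.sum_congr rfl fun i _ => ?_
    have : ⟪b i, B x⟫_ℂ = (lam i : ℂ) * ⟪b i, x⟫_ℂ := by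
      rw [← hBsym (b i) x, hBsym.apply_eigenvectorBasis hnn i, inner_smul_left]
      simp
      rfl
    rw [this]; ring
  have hsumx : ⟪x, x⟫_ℂ = ∑ i : Fin n, ⟪x, b i⟫_ℂ * ⟪b i, x⟫_ℂ :=
    (b.sum_inner_mul_inner x x).symm
  -- termwise real bound
  have hterm : ∀ i : Fin n,
      δ * (⟪x, b i⟫_ℂ * ⟪b i, x⟫_ℂ).re ≤ ((lam i : ℂ) * (⟪x, b i⟫_ℂ * ⟪b i, x⟫_ℂ)).re := by
    intro i
    have hprod : ⟪x, b i⟫_ℂ * ⟪b i, x⟫_ℂ = (Complex.normSq ⟪b i, x⟫_ℂ : ℂ) := by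
      rw [← inner_conj_symm (b i) x]
      simp [Complex.normSq_eq_conj_mul_self]
    rw [hprod]
    simp only [← Complex.ofReal_mul, Complex.ofReal_re]
    by_cases h0 : lam i = 0
    · rw [hcoef i h0]
      simp [h0]
    · have := hlam_ge i h0
      have hns : 0 ≤ Complex.normSq ⟪b i, x⟫_ℂ := Complex.normSq_nonneg _
      nlinarith
  -- B quadratic form bound
  have hBx : δ * ‖x‖ ^ 2 ≤ (⟪x, B x⟫_ℂ).re := by
    have hxx : (⟪x, x⟫_ℂ).re = ‖x‖ ^ 2 := by
      rw [inner_self_eq_norm_sq_to_K (𝕜 := ℂ) x]; simp [pow_two, Complex.mul_re]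
    calc δ * ‖x‖ ^ 2 = δ * (⟪x, x⟫_ℂ).re := by rw [hxx]
      _ = ∑ i : Fin n, δ * (⟪x, b i⟫_ℂ * ⟪b i, x⟫_ℂ).re := by
          rw [hsumx, Complex.re_sum, Finset.mul_sum]
      _ ≤ ∑ i : Fin n, ((lam i : ℂ) * (⟪x, b i⟫_ℂ * ⟪b i, x⟫_ℂ)).re :=
          Finset.sum_le_sum fun i _ => hterm i
      _ = (⟪x, B x⟫_ℂ).re := by rw [hsumB, Complex.re_sum]
  -- A quadratic form
  have hAxq : (⟪x, A x⟫_ℂ).re = μ.re * ‖x‖ ^ 2 := by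
    rw [hAx, inner_smul_right]
    rw [inner_self_eq_norm_sq_to_K (𝕜 := ℂ) x]
    simp [pow_two, Complex.mul_re, Complex.mul_im]
  -- domination
  have hd := hdom x
  have hsub : (⟪x, (A - (c : ℂ) • B) x⟫_ℂ).re = (⟪x, A x⟫_ℂ).re - c * (⟪x, B x⟫_ℂ).re := by
    rw [LinearMap.sub_apply, LinearMap.smul_apply, inner_sub_right, inner_smul_right]
    simp [Complex.mul_re, Complex.sub_re]
  rw [hsub] at hd
  have hxnorm : (0 : ℝ) < ‖x‖ ^ 2 := by
    have : 0 < ‖x‖ := norm_pos_iff.mpr hx0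
    positivity
  have hfinal : c * δ ≤ μ.re := by
    have h1 : c * (δ * ‖x‖ ^ 2) ≤ c * (⟪x, B x⟫_ℂ).re :=
      mul_le_mul_of_nonneg_left hBx hc.le
    have h2 : c * (δ * ‖x‖ ^ 2) ≤ μ.re * ‖x‖ ^ 2 := by
      rw [hAxq] at hd; linarith
    nlinarith
  rw [Complex.le_def]
  constructor
  · simpa using hfinal
  · simp [hμim]
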